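/- Over a ℚ-algebra A, for a sequence (x₁,x₂,…) ∈ A^{ℕ⁺} with associated necklace vector α = g̃⁻¹(x) (i.e. Σ_{d|n} d·α_d = x_n for all n), one has ∏_{n≥1}(1 − zⁿ)^{−αₙ} = exp(Σ_{n≥1} (xₙ/n) zⁿ) as formal power series. -/

import Mathlib

variable {A : Type*} [CommRing A] [Algebra ℚ A]

/-- Composition `f ∘ g` of formal power series (`g` with zero constant term),
defined coefficientwise. -/
noncomputable def comp (f g : PowerSeries A) : PowerSeries A :=
  PowerSeries.mk fun n => ∑ k ∈ Finset.range (n + 1),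
    PowerSeries.coeff k f * PowerSeries.coeff n (g ^ k)

/-- The series `log(1-z) = -Σ_{m≥1} zᵐ/m`. -/
noncomputable def logOneSub : PowerSeries A :=
  PowerSeries.mk fun m => if m = 0 then 0 else algebraMap ℚ A (-(1 / m))

/-- The factor `(1 - zⁿ)^{-αₙ} := exp(-αₙ · log(1 - zⁿ))`. -/
noncomputable def necklFactor (c : A) (n : ℕ) : PowerSeries A :=
  comp (PowerSeries.exp A) ((-c) • comp logOneSub (PowerSeries.X ^ n))

/-- The infinite product `∏_{n≥1} (1 - zⁿ)^{-αₙ}`, defined coefficientwise (the `N`-th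
coefficient only involves the factors with index `≤ N`). -/
noncomputable def necklProd (α : ℕ → A) : PowerSeries A :=
  PowerSeries.mk fun N =>
    PowerSeries.coeff N (∏ k ∈ Finset.range N, necklFactor (α (k + 1)) (k + 1))

open PowerSeries Finset
open scoped Nat

lemma coeff_comp (f g : PowerSeries A) (n : ℕ) :
    coeff n (comp f g) =
      ∑ k ∈ range (n + 1), coeff k f * coeff n (g ^ k) := by
  simp [comp]

lemma coeff_pow_eq_zero' {g : PowerSeries A} (hg : constantCoeff g = 0)
    {n k : ℕ} (h : n < k) : coeff n (g ^ k) = 0 := by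
  have : (X : PowerSeries A) ^ k ∣ g ^ k :=
    pow_dvd_pow_of_dvd (X_dvd_iff.2 hg) k
  exact (X_pow_dvd_iff.1 this) n h

lemma coeff_mul_pow_eq_zero' {u v : PowerSeries A} (hu : constantCoeff u = 0)
    (hv : constantCoeff v = 0) {N k l : ℕ} (h : N < k + l) :
    coeff N (u ^ k * v ^ l) = 0 := by
  have : (X : PowerSeries A) ^ (k + l) ∣ u ^ k * v ^ l := by
    rw [pow_add]
    exact mul_dvd_mul (pow_dvd_pow_of_dvd (X_dvd_iff.2 hu) k)
      (pow_dvd_pow_of_dvd (X_dvd_iff.2 hv) l)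
  exact (X_pow_dvd_iff.1 this) N h

lemma coeff_comp_of_le {f g : PowerSeries A} (hg : constantCoeff g = 0) {n : ℕ} (M : ℕ)
    (h : n + 1 ≤ M) :
    coeff n (comp f g) = ∑ k ∈ range M, coeff k f * coeff n (g ^ k) := by
  rw [coeff_comp]
  exact Finset.sum_subset (Finset.range_subset_range.2 h) fun k _ hk => by
    rw [coeff_pow_eq_zero' hg (by simpa using hk), mul_zero]

lemma square_eq_triangle (G : ℕ → ℕ → A) (N : ℕ)
    (hG : ∀ k l, N < k + l → G k l = 0) :
    ∑ k ∈ range (N + 1), ∑ l ∈ range (N + 1), G k l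
      = ∑ m ∈ range (N + 1), ∑ k ∈ range (m + 1), G k (m - k) := by
  have lhs_eq : ∑ k ∈ range (N + 1), ∑ l ∈ range (N + 1), G k l
      = ∑ p ∈ (range (N + 1) ×ˢ range (N + 1)).filter (fun p => p.1 + p.2 ≤ N),
          G p.1 p.2 := by
    rw [← Finset.sum_product']
    refine (Finset.sum_filter_of_ne fun p _ hne => ?_).symm
    by_contra hc
    push_neg at hc
    exact hne (hG _ _ hc)
  have rhs_eq : ∑ m ∈ range (N + 1), ∑ k ∈ range (m + 1), G k (m - k)
      = ∑ p ∈ (range (N + 1) ×ˢ range (N + 1)).filter (fun p => p.1 + p.2 ≤ N),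
          G p.1 p.2 := by
    rw [← Finset.sum_sigma (range (N + 1)) (fun m => range (m + 1))
      (fun p => G p.2 (p.1 - p.2))]
    refine Finset.sum_nbij' (fun p => (p.2, p.1 - p.2)) (fun p => ⟨p.1 + p.2, p.1⟩)
      ?_ ?_ ?_ ?_ ?_
    · intro a ha
      rw [Finset.mem_sigma] at ha
      obtain ⟨h1, h2⟩ := ha
      rw [Finset.mem_range] at h1 h2
      simp only [Finset.mem_filter, Finset.mem_product, Finset.mem_range]
      omega
    · intro a ha
      simp only [Finset.mem_filter, Finset.mem_product, Finset.mem_range] at ha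
      simp only [Finset.mem_sigma, Finset.mem_range]
      omega
    · rintro ⟨m, k⟩ ha
      simp only [Finset.mem_sigma, Finset.mem_range] at ha
      obtain ⟨h1, h2⟩ := ha
      dsimp only
      have hkm : k + (m - k) = m := by omega
      simp only [hkm]
    · intro a ha
      simp only [Finset.mem_filter, Finset.mem_product, Finset.mem_range] at ha
      dsimp only
      rw [Prod.ext_iff]
      dsimp only
      omega
    · intro a _; rfl
  rw [lhs_eq, rhs_eq]

lemma comp_exp_mul (u v : PowerSeries A) (hu : constantCoeff u = 0)
    (hv : constantCoeff v = 0) :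
    comp (exp A) u * comp (exp A) v = comp (exp A) (u + v) := by
  have huv : constantCoeff (u + v) = 0 := by
    rw [map_add, hu, hv, add_zero]
  ext N
  set e : ℕ → A := fun k => algebraMap ℚ A (1 / (k ! : ℚ)) with he
  have hekey : ∀ {k m : ℕ}, k ≤ m → e m * ((m.choose k : ℕ) : A) = e k * e (m - k) := by
    intro k m hkm
    have hc : ((m.choose k : ℕ) : A) = algebraMap ℚ A ((m.choose k : ℕ) : ℚ) :=
      (map_natCast (algebraMap ℚ A) _).symm
    rw [he, hc, ← map_mul, ← map_mul]
    congr 1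
    rw [Nat.cast_choose ℚ hkm]
    have h1 : (m ! : ℚ) ≠ 0 := Nat.cast_ne_zero.2 (Nat.factorial_ne_zero m)
    have h2 : (k ! : ℚ) ≠ 0 := Nat.cast_ne_zero.2 (Nat.factorial_ne_zero k)
    have h3 : ((m - k)! : ℚ) ≠ 0 := Nat.cast_ne_zero.2 (Nat.factorial_ne_zero _)
    field_simp
  have key : ∀ (w : PowerSeries A), constantCoeff w = 0 → ∀ i, i ≤ N →
      coeff i (comp (exp A) w) = ∑ k ∈ range (N + 1), e k * coeff i (w ^ k) := by
    intro w hw i hi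
    rw [coeff_comp_of_le hw (N + 1) (by omega)]
    exact Finset.sum_congr rfl fun k _ => by rw [PowerSeries.coeff_exp]
  rw [PowerSeries.coeff_mul]
  calc
    ∑ p ∈ antidiagonal N, coeff p.1 (comp (exp A) u) * coeff p.2 (comp (exp A) v)
        = ∑ p ∈ antidiagonal N, ∑ k ∈ range (N + 1), ∑ l ∈ range (N + 1),
            e k * coeff p.1 (u ^ k) * (e l * coeff p.2 (v ^ l)) := by
          refine Finset.sum_congr rfl fun p hp => ?_
          rw [Finset.HasAntidiagonal.mem_antidiagonal] at hp
          rw [key u hu p.1 (by omega), key v hv p.2 (by omega), Finset.sum_mul_sum]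
    _ = ∑ k ∈ range (N + 1), ∑ l ∈ range (N + 1),
          e k * e l * ∑ p ∈ antidiagonal N, coeff p.1 (u ^ k) * coeff p.2 (v ^ l) := by
          rw [Finset.sum_comm]
          refine Finset.sum_congr rfl fun k _ => ?_
          rw [Finset.sum_comm]
          refine Finset.sum_congr rfl fun l _ => ?_
          rw [Finset.mul_sum]
          exact Finset.sum_congr rfl fun p _ => by ring
    _ = ∑ k ∈ range (N + 1), ∑ l ∈ range (N + 1), e k * e l * coeff N (u ^ k * v ^ l) := by
          refine Finset.sum_congr rfl fun k _ => Finset.sum_congr rfl fun l _ => ?_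
          rw [← PowerSeries.coeff_mul]
    _ = ∑ m ∈ range (N + 1), ∑ k ∈ range (m + 1),
          e k * e (m - k) * coeff N (u ^ k * v ^ (m - k)) := by
          exact square_eq_triangle (fun k l => e k * e l * coeff N (u ^ k * v ^ l)) N
            (fun k l hkl => by rw [coeff_mul_pow_eq_zero' hu hv hkl, mul_zero])
    _ = ∑ m ∈ range (N + 1), e m * coeff N ((u + v) ^ m) := by
          refine Finset.sum_congr rfl fun m _ => ?_
          rw [add_pow, map_sum, Finset.mul_sum]
          refine Finset.sum_congr rfl fun k hk => ?_
          rw [Finset.mem_range] at hk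
          rw [← map_natCast (PowerSeries.C (R := A)) (m.choose k), PowerSeries.coeff_mul_C,
            ← hekey (by omega)]
          ring
    _ = coeff N (comp (exp A) (u + v)) := (key (u + v) huv N le_rfl).symm

lemma comp_exp_zero : comp (PowerSeries.exp A) 0 = 1 := by
  ext n
  rw [coeff_comp]
  rcases Nat.eq_zero_or_pos n with hn | hn
  · subst hn
    simp [PowerSeries.coeff_exp]
  · rw [Finset.sum_eq_zero, PowerSeries.coeff_one, if_neg hn.ne']
    intro k hk
    rcases Nat.eq_zero_or_pos k with rfl | hk1
    · simp [PowerSeries.coeff_one, hn.ne']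
    · rw [zero_pow hk1.ne', map_zero, mul_zero]

lemma prod_comp_exp (u : ℕ → PowerSeries A) (hu : ∀ k, constantCoeff (u k) = 0) (N : ℕ) :
    ∏ k ∈ range N, comp (PowerSeries.exp A) (u k)
      = comp (PowerSeries.exp A) (∑ k ∈ range N, u k) := by
  induction N with
  | zero => simpa using comp_exp_zero.symm
  | succ n ih =>
    rw [Finset.prod_range_succ, Finset.sum_range_succ, ih,
      comp_exp_mul _ _ (by rw [map_sum]; exact Finset.sum_eq_zero fun k _ => hu k) (hu n)]

lemma coeff_pow_congr {g₁ g₂ : PowerSeries A} {N : ℕ}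
    (h : ∀ i, i ≤ N → coeff i g₁ = coeff i g₂) (k : ℕ) :
    ∀ i, i ≤ N → coeff i (g₁ ^ k) = coeff i (g₂ ^ k) := by
  induction k with
  | zero => intro i _; rfl
  | succ k ih =>
    intro i hi
    rw [pow_succ, pow_succ, PowerSeries.coeff_mul, PowerSeries.coeff_mul]
    refine Finset.sum_congr rfl fun p hp => ?_
    rw [Finset.HasAntidiagonal.mem_antidiagonal] at hp
    rw [ih p.1 (by omega), h p.2 (by omega)]

lemma coeff_comp_congr {f g₁ g₂ : PowerSeries A} {N : ℕ}
    (h : ∀ i, i ≤ N → coeff i g₁ = coeff i g₂) :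
    coeff N (comp f g₁) = coeff N (comp f g₂) := by
  rw [coeff_comp, coeff_comp]
  exact Finset.sum_congr rfl fun k _ => by rw [coeff_pow_congr h k N le_rfl]

lemma coeff_comp_log_X_pow {n : ℕ} (hn : 1 ≤ n) (m : ℕ) :
    coeff m (comp logOneSub (X ^ n)) =
      if n ∣ m ∧ m ≠ 0 then algebraMap ℚ A (-(1 / ((m / n : ℕ) : ℚ))) else 0 := by
  rw [coeff_comp]
  have hcd : ∀ k : ℕ, coeff m (((X : PowerSeries A) ^ n) ^ k) = if m = n * k then 1 else 0 := by
    intro k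
    rw [← pow_mul, PowerSeries.coeff_X_pow]
  by_cases hcond : n ∣ m ∧ m ≠ 0
  · obtain ⟨hdvd, hm0⟩ := hcond
    rw [if_pos ⟨hdvd, hm0⟩]
    have hk0 : m / n ∈ range (m + 1) := by
      rw [Finset.mem_range]
      exact Nat.lt_succ_of_le (Nat.div_le_self m n)
    rw [Finset.sum_eq_single (m / n)]
    · have hmn : m = n * (m / n) := (Nat.mul_div_cancel' hdvd).symm
      have hq : m / n ≠ 0 := by
        have h1 : n ≤ m := Nat.le_of_dvd (Nat.pos_of_ne_zero hm0) hdvd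
        exact (Nat.div_pos h1 (by omega)).ne'
      rw [hcd, if_pos hmn, mul_one, logOneSub, PowerSeries.coeff_mk, if_neg hq]
    · intro k _ hkne
      rw [hcd, if_neg, mul_zero]
      intro hmeq
      refine hkne ?_
      rw [hmeq, Nat.mul_div_cancel_left]
      omega
    · intro hctr
      exact absurd hk0 hctr
  · rw [if_neg hcond]
    refine Finset.sum_eq_zero fun k _ => ?_
    rcases Nat.eq_zero_or_pos k with rfl | hk1
    · rw [logOneSub, PowerSeries.coeff_mk, if_pos rfl, zero_mul]
    · rw [hcd, if_neg, mul_zero]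
      intro hmeq
      exact hcond ⟨⟨k, hmeq⟩, hmeq ▸ Nat.mul_ne_zero (by omega) hk1.ne'⟩

/-- If `Σ_{d∣n} d·α_d = xₙ` for all `n ≥ 1`, then
`∏_{n≥1} (1 - zⁿ)^{-αₙ} = exp(Σ_{n≥1} (xₙ/n) zⁿ)`. -/
theorem necklProd_eq_exp (α x : ℕ → A)
    (h : ∀ n, 1 ≤ n → ∑ d ∈ n.divisors, ((d : ℕ) : A) * α d = x n) :
    necklProd α =
      comp (PowerSeries.exp A)
        (PowerSeries.mk fun n => if n = 0 then 0 else algebraMap ℚ A (1 / n) * x n) := by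
  set T : PowerSeries A :=
    PowerSeries.mk fun n => if n = 0 then 0 else algebraMap ℚ A (1 / n) * x n with hT
  set u : ℕ → PowerSeries A :=
    fun k => (-α (k + 1)) • comp logOneSub (X ^ (k + 1)) with hudef
  have hu0 : ∀ k, constantCoeff (u k) = 0 := by
    intro k
    rw [← PowerSeries.coeff_zero_eq_constantCoeff_apply, hudef]
    rw [PowerSeries.coeff_smul, coeff_comp_log_X_pow (by omega) 0,
      if_neg (by simp), smul_zero]
  ext N
  rw [necklProd, PowerSeries.coeff_mk]
  have hfac : ∀ k, necklFactor (α (k + 1)) (k + 1) = comp (PowerSeries.exp A) (u k) := by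
    intro k; rfl
  have hSN : ∏ k ∈ range N, necklFactor (α (k + 1)) (k + 1)
      = comp (PowerSeries.exp A) (∑ k ∈ range N, u k) := by
    rw [Finset.prod_congr rfl fun k _ => hfac k]
    exact prod_comp_exp u hu0 N
  rw [hSN]
  refine coeff_comp_congr fun i hi => ?_
  rcases Nat.eq_zero_or_pos i with rfl | hi1
  · rw [hT, PowerSeries.coeff_mk, if_pos rfl, map_sum]
    refine Finset.sum_eq_zero fun k _ => ?_
    rw [PowerSeries.coeff_zero_eq_constantCoeff_apply]
    exact hu0 k
  · -- 1 ≤ i ≤ N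
    rw [map_sum, hT, PowerSeries.coeff_mk, if_neg hi1.ne']
    have hstep : ∀ k ∈ range N, coeff i (u k)
        = if (k + 1) ∣ i then α (k + 1) * algebraMap ℚ A (1 / ((i / (k + 1) : ℕ) : ℚ)) else 0 := by
      intro k _
      rw [hudef, PowerSeries.coeff_smul, coeff_comp_log_X_pow (by omega) i]
      by_cases hdvd : (k + 1) ∣ i
      · rw [if_pos ⟨hdvd, hi1.ne'⟩, if_pos hdvd, smul_eq_mul, map_neg]
        ring
      · rw [if_neg (by tauto), if_neg hdvd, smul_zero]
    rw [Finset.sum_congr rfl hstep, ← Finset.sum_filter]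
    rw [← h i hi1, Finset.mul_sum]
    refine Finset.sum_nbij' (fun k => k + 1) (fun d => d - 1) ?_ ?_ ?_ ?_ ?_
    · intro a ha
      rw [Finset.mem_filter] at ha
      exact Nat.mem_divisors.2 ⟨ha.2, hi1.ne'⟩
    · intro d hd
      rw [Nat.mem_divisors] at hd
      have hd1 : 1 ≤ d := Nat.pos_of_dvd_of_pos hd.1 hi1
      have hdi : d ≤ i := Nat.le_of_dvd hi1 hd.1
      simp only [Finset.mem_filter, Finset.mem_range]
      constructor
      · omega
      · rw [Nat.sub_add_cancel hd1]; exact hd.1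
    · intro a _
      omega
    · intro d hd
      rw [Nat.mem_divisors] at hd
      have hd1 : 1 ≤ d := Nat.pos_of_dvd_of_pos hd.1 hi1
      omega
    · intro a ha
      rw [Finset.mem_filter] at ha
      obtain ⟨-, hdvd⟩ := ha
      set d := a + 1 with hd
      have hd0 : (d : ℚ) ≠ 0 := by positivity
      have hi0 : (i : ℚ) ≠ 0 := Nat.cast_ne_zero.2 hi1.ne'
      have hcast : ((i / d : ℕ) : ℚ) = (i : ℚ) / d := by
        rw [Nat.cast_div hdvd hd0]
      rw [hcast, one_div_div]
      have : algebraMap ℚ A ((d : ℚ) / i) = algebraMap ℚ A (1 / i) * ((d : ℕ) : A) := by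
        rw [← map_natCast (algebraMap ℚ A) d, ← map_mul]
        congr 1
        field_simp
      rw [this]
      ring
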